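/- Let X and Y be Banach spaces and let A ⊆ X × Y be a closed linear relation with ran A = Y. Then there exists α > 0 such that for every bounded linear operator B : X → Y with ‖B‖ < α one has ran(A + B) = Y, where A + B := {(x, y + Bx) : (x,y) ∈ A}. -/

import Mathlib

open Filter Topology

/-- Surjectivity of a closed relation is stable under small bounded perturbations:
if `A ⊆ X × Y` is a closed relation with `ran A = Y`, then there is `α > 0` such that
for every `B ∈ ℒ(X,Y)` with `‖B‖ < α`, the relation `A + B = {(x, y + Bx) : (x,y) ∈ A}`
is surjective. -/
theorem stmt_4 {𝕜 : Type*} [RCLike 𝕜]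
    {X Y : Type*} [NormedAddCommGroup X] [NormedSpace 𝕜 X] [CompleteSpace X]
    [NormedAddCommGroup Y] [NormedSpace 𝕜 Y] [CompleteSpace Y]
    (A : Submodule 𝕜 (X × Y)) (hA : IsClosed (A : Set (X × Y)))
    (hsurj : ∀ y : Y, ∃ x, (x, y) ∈ A) :
    ∃ α : ℝ, 0 < α ∧ ∀ B : X →L[𝕜] Y, ‖B‖ < α →
      ∀ v : Y, ∃ p ∈ A, v = p.2 + B p.1 := by
  haveI : CompleteSpace A := hA.completeSpace_coe
  set f : A →L[𝕜] Y := (ContinuousLinearMap.snd 𝕜 X Y).comp A.subtypeL with hfdef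
  have hf : Function.Surjective f := by
    intro y
    obtain ⟨x, hx⟩ := hsurj y
    exact ⟨⟨(x, y), hx⟩, rfl⟩
  obtain ⟨C, Cpos, hC⟩ := f.exists_preimage_norm_le hf
  refine ⟨1 / C, by positivity, ?_⟩
  intro B hB v
  choose g hg hgn using hC
  set h : A →L[𝕜] Y := B.comp ((ContinuousLinearMap.fst 𝕜 X Y).comp A.subtypeL) with hhdef
  set q : ℝ := ‖B‖ * C with hqdef
  have hq0 : 0 ≤ q := by positivity
  have hq : q < 1 := by
    rw [hqdef, ← lt_div_iff₀ Cpos]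
    exact hB
  -- iterate
  let p : ℕ → A := fun n => Nat.rec (g v) (fun _ a => g (-(h a))) n
  have hp0 : p 0 = g v := rfl
  have hps : ∀ n, p (n + 1) = g (-(h (p n))) := fun n => rfl
  have hnorm1 : ∀ a : A, ‖h a‖ ≤ ‖B‖ * ‖a‖ := by
    intro a
    calc ‖h a‖ = ‖B ((a : X × Y).1)‖ := rfl
      _ ≤ ‖B‖ * ‖(a : X × Y).1‖ := B.le_opNorm _
      _ ≤ ‖B‖ * ‖a‖ := by
          gcongr
          exact norm_fst_le (a : X × Y)
  have key : ∀ n, ‖p n‖ ≤ q ^ n * (C * ‖v‖) := by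
    intro n
    induction n with
    | zero => simpa [hp0] using hgn v
    | succ n ih =>
        calc ‖p (n + 1)‖ = ‖g (-(h (p n)))‖ := by rw [hps]
          _ ≤ C * ‖-(h (p n))‖ := hgn _
          _ = C * ‖h (p n)‖ := by rw [norm_neg]
          _ ≤ C * (‖B‖ * ‖p n‖) := by gcongr; exact hnorm1 _
          _ = q * ‖p n‖ := by ring
          _ ≤ q * (q ^ n * (C * ‖v‖)) := by gcongr
          _ = q ^ (n + 1) * (C * ‖v‖) := by ring
  have hsum : Summable p :=
    Summable.of_norm_bounded ((summable_geometric_of_lt_one hq0 hq).mul_right _) key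
  set s : A := ∑' n, p n with hsdef
  have hfsum : Summable fun n => f (p n) := hsum.map f f.continuous
  have hfs : f s = ∑' n, f (p n) := f.map_tsum hsum
  have hhs : h s = ∑' n, h (p n) := h.map_tsum hsum
  have hshift : (∑' n, f (p n)) = v + ∑' n, f (p (n + 1)) := by
    rw [Summable.tsum_eq_zero_add hfsum, hp0, hg v]
  have hstep : ∀ n, f (p (n + 1)) = -(h (p n)) := by
    intro n
    rw [hps]
    exact hg _
  have hfinal : f s = v - h s := by
    rw [hfs, hshift, hhs]
    simp only [hstep]
    rw [tsum_neg]
    abel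
  refine ⟨(s : X × Y), s.2, ?_⟩
  have : (s : X × Y).2 = v - B (s : X × Y).1 := hfinal
  rw [this]
  abel
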